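/- The set of bi-leveled trees on n internal nodes, ordered by (s;S) ≤ (t;T) iff s ≤ t in the Tamari lattice and T ⊆ S, is a lattice. -/

import Mathlib

/-- Planar rooted binary trees. -/
inductive PBT : Type
  | leaf : PBT
  | node : PBT → PBT → PBT
deriving DecidableEq

namespace PBT

/-- Number of internal nodes. -/
def numNodes : PBT → ℕ
  | leaf => 0
  | node l r => numNodes l + numNodes r + 1

/-- Number of leaves. -/
def numLeaves : PBT → ℕ
  | leaf => 1
  | node l r => numLeaves l + numLeaves r

/-- A single left-to-right (Tamari) rotation somewhere in a tree. -/
inductive Rot : PBT → PBT → Prop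
  | here (a b c : PBT) : Rot (node (node a b) c) (node a (node b c))
  | left {l l' : PBT} (r : PBT) : Rot l l' → Rot (node l r) (node l' r)
  | right (l : PBT) {r r' : PBT} : Rot r r' → Rot (node l r) (node l r')

/-- The Tamari order: reflexive-transitive closure of rotations. -/
def tamariLE : PBT → PBT → Prop := Relation.ReflTransGen Rot

/-- Positions of internal nodes as paths from the root
(`false` = go left, `true` = go right). -/
def isNode : PBT → List Bool → Prop
  | leaf, _ => False
  | node _ _, [] => True
  | node l _, (false :: p) => isNode l p
  | node _ r, (true :: p) => isNode r p

/-- 1-based left-to-right (in-order) index of a node position. -/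
def idx : PBT → List Bool → ℕ
  | leaf, _ => 0
  | node l _, [] => numNodes l + 1
  | node l _, (false :: p) => idx l p
  | node l r, (true :: p) => numNodes l + 1 + idx r p

/-- `nodeLE t i j` : in the node poset of `t` (root maximal, a node is below all
of its ancestors), the node with in-order index `i` is ≤ the node with index `j`
(i.e. the position of `j` is a prefix of the position of `i`). -/
def nodeLE (t : PBT) (i j : ℕ) : Prop :=
  ∃ p q : List Bool, isNode t p ∧ isNode t q ∧ idx t p = i ∧ idx t q = j ∧ q <+: p

/-- Size of the left subtree of the node with in-order index `i`. -/
def lvec : PBT → ℕ → ℕ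
  | leaf, _ => 0
  | node l r, i =>
    if i ≤ l.numNodes then lvec l i
    else if i = l.numNodes + 1 then l.numNodes
    else lvec r (i - l.numNodes - 1)

/-- Size of the right subtree of the node with in-order index `i`. -/
def rvec : PBT → ℕ → ℕ
  | leaf, _ => 0
  | node l r, i =>
    if i ≤ l.numNodes then rvec l i
    else if i = l.numNodes + 1 then r.numNodes
    else rvec r (i - l.numNodes - 1)

/-- A statistic strictly decreasing under rotations. -/
def wt : PBT → ℕ
  | leaf => 0
  | node l r => wt l + wt r + numNodes l

theorem lvec_lt {t : PBT} {i : ℕ} (hi : 1 ≤ i) : lvec t i < i := by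
  induction t generalizing i with
  | leaf => simp only [lvec]; omega
  | node l r ihl ihr =>
    simp only [lvec]
    split
    · exact ihl hi
    · split
      · omega
      · rename_i h1 h2
        have := ihr (i := i - l.numNodes - 1) (by omega)
        omega

theorem lvec_eq_zero {t : PBT} {i : ℕ} (hi : t.numNodes < i) : lvec t i = 0 := by
  induction t generalizing i with
  | leaf => rfl
  | node l r ihl ihr =>
    simp only [numNodes] at hi
    simp only [lvec]
    rw [if_neg (by omega), if_neg (by omega)]
    exact ihr (by omega)

theorem lvec_zero (t : PBT) : lvec t 0 = 0 := by
  induction t with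
  | leaf => rfl
  | node l r ihl ihr => simp [lvec, ihl]

theorem rvec_bound {t : PBT} {i : ℕ} (hi : 1 ≤ i) (hn : i ≤ t.numNodes) :
    i + rvec t i ≤ t.numNodes := by
  induction t generalizing i with
  | leaf => simp [numNodes] at hn; omega
  | node l r ihl ihr =>
    simp only [numNodes] at hn ⊢
    simp only [rvec]
    split
    · rename_i h; have := ihl hi h; omega
    · split
      · omega
      · rename_i h1 h2
        have := ihr (i := i - l.numNodes - 1) (by omega) (by omega)
        omega

/-- Nesting property of left-subtree intervals. -/
theorem lvec_nest {t : PBT} {i j : ℕ} (hj : 1 ≤ j) (hji : j < i)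
    (hin : i ≤ j + lvec t i) : i + lvec t j ≤ j + lvec t i := by
  induction t generalizing i j with
  | leaf => simp [lvec] at hin ⊢; omega
  | node l r ihl ihr =>
    rcases lt_trichotomy i (l.numNodes + 1) with hc | hc | hc
    · have hi' : lvec (node l r) i = lvec l i := by simp [lvec]; omega
      have hj' : lvec (node l r) j = lvec l j := by
        simp only [lvec]; rw [if_pos (by omega)]
      rw [hi'] at hin ⊢; rw [hj']
      exact ihl hj hji hin
    · have hi' : lvec (node l r) i = l.numNodes := by
        simp only [lvec]; rw [if_neg (by omega), if_pos (by omega)]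
      have hj' : lvec (node l r) j = lvec l j := by
        simp only [lvec]; rw [if_pos (by omega)]
      rw [hi'] at hin ⊢; rw [hj']
      have := lvec_lt (t := l) hj
      omega
    · have hi' : lvec (node l r) i = lvec r (i - l.numNodes - 1) := by
        simp only [lvec]; rw [if_neg (by omega), if_neg (by omega)]
      rw [hi'] at hin ⊢
      have hri : lvec r (i - l.numNodes - 1) < i - l.numNodes - 1 ∨ i - l.numNodes - 1 = 0 := by
        rcases Nat.eq_zero_or_pos (i - l.numNodes - 1) with h | h
        · right; exact h
        · left; exact lvec_lt h
      have hjbig : l.numNodes + 1 < j := by omega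
      have hj' : lvec (node l r) j = lvec r (j - l.numNodes - 1) := by
        simp only [lvec]; rw [if_neg (by omega), if_neg (by omega)]
      rw [hj']
      have := ihr (i := i - l.numNodes - 1) (j := j - l.numNodes - 1)
        (by omega) (by omega) (by omega)
      omega
theorem lvec_left {l r : PBT} {i : ℕ} (h : i ≤ l.numNodes) :
    lvec (node l r) i = lvec l i := by simp [lvec, h]

theorem lvec_root (l r : PBT) : lvec (node l r) (l.numNodes + 1) = l.numNodes := by
  simp [lvec]

theorem lvec_right {l r : PBT} {i : ℕ} (h : l.numNodes + 1 < i) :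
    lvec (node l r) i = lvec r (i - l.numNodes - 1) := by
  rw [lvec, if_neg (by omega), if_neg (by omega)]

theorem rvec_left {l r : PBT} {i : ℕ} (h : i ≤ l.numNodes) :
    rvec (node l r) i = rvec l i := by simp [rvec, h]

theorem rvec_root (l r : PBT) : rvec (node l r) (l.numNodes + 1) = r.numNodes := by
  simp [rvec]

theorem rvec_right {l r : PBT} {i : ℕ} (h : l.numNodes + 1 < i) :
    rvec (node l r) i = rvec r (i - l.numNodes - 1) := by
  rw [rvec, if_neg (by omega), if_neg (by omega)]

theorem numNodes_node (l r : PBT) : numNodes (node l r) = l.numNodes + r.numNodes + 1 := rfl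

theorem Rot.numNodes_eq {s t : PBT} (h : Rot s t) : s.numNodes = t.numNodes := by
  induction h with
  | here a b c => simp only [numNodes_node]; omega
  | left r h ih => simp only [numNodes_node, ih]
  | right l h ih => simp only [numNodes_node, ih]

theorem Rot.wt_lt {s t : PBT} (h : Rot s t) : wt t < wt s := by
  induction h with
  | here a b c => simp only [wt, numNodes_node]; omega
  | left r h ih =>
    rename_i l l'
    have := h.numNodes_eq
    simp only [wt]; omega
  | right l h ih => simp only [wt]; omega

theorem Rot.lvec_le {s t : PBT} (h : Rot s t) (i : ℕ) : lvec t i ≤ lvec s i := by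
  induction h generalizing i with
  | here a b c =>
    simp only [lvec, numNodes]
    rw [show i - a.numNodes - 1 - b.numNodes - 1 = i - (a.numNodes + b.numNodes + 1) - 1 from by omega]
    split_ifs <;> (try simp only [*, ↓reduceIte]) <;> omega
  | left r h ih =>
    rename_i l l'
    have hnn := h.numNodes_eq
    have hih := ih i
    simp only [lvec, numNodes]
    rw [hnn]
    split_ifs <;> omega
  | right l h ih =>
    have hih := ih (i - l.numNodes - 1)
    simp only [lvec, numNodes]
    split_ifs <;> omega

theorem Rot.rvec_le {s t : PBT} (h : Rot s t) (i : ℕ) : rvec s i ≤ rvec t i := by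
  induction h generalizing i with
  | here a b c =>
    simp only [rvec, numNodes]
    rw [show i - a.numNodes - 1 - b.numNodes - 1 = i - (a.numNodes + b.numNodes + 1) - 1 from by omega]
    split_ifs <;> grind
  | left r h ih =>
    rename_i l l'
    have hnn := h.numNodes_eq
    have hih := ih i
    simp only [rvec, numNodes]
    rw [hnn]
    split_ifs <;> omega
  | right l h ih =>
    rename_i r r'
    have hnn := h.numNodes_eq
    have hih := ih (i - l.numNodes - 1)
    simp only [rvec, numNodes]
    rw [hnn]
    split_ifs <;> omega

theorem tamariLE.numNodes_eq {s t : PBT} (h : tamariLE s t) : s.numNodes = t.numNodes := by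
  induction h with
  | refl => rfl
  | tail _ h ih => exact ih.trans h.numNodes_eq

theorem tamariLE.lvec_le {s t : PBT} (h : tamariLE s t) (i : ℕ) : lvec t i ≤ lvec s i := by
  induction h with
  | refl => exact le_refl _
  | tail _ h ih => exact (h.lvec_le i).trans ih

theorem tamariLE.rvec_le {s t : PBT} (h : tamariLE s t) (i : ℕ) : rvec s i ≤ rvec t i := by
  induction h with
  | refl => exact le_refl _
  | tail _ h ih => exact ih.trans (h.rvec_le i)
theorem lvec_inj {s t : PBT} (hn : s.numNodes = t.numNodes)
    (h : ∀ i, lvec s i = lvec t i) : s = t := by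
  induction s generalizing t with
  | leaf =>
    cases t with
    | leaf => rfl
    | node l r => simp [numNodes] at hn
  | node l r ihl ihr =>
    cases t with
    | leaf => simp [numNodes] at hn
    | node l' r' =>
      have hll : l.numNodes = l'.numNodes := by
        by_contra hne
        rcases Nat.lt_or_ge l.numNodes l'.numNodes with hlt | hge
        · have h1 := h (l'.numNodes + 1)
          rw [lvec_right (by omega), lvec_root] at h1
          rcases Nat.eq_zero_or_pos (l'.numNodes + 1 - l.numNodes - 1) with hz | hz
          · rw [hz, lvec_zero] at h1; omega
          · have := lvec_lt (t := r) hz; omega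
        · have hlt : l'.numNodes < l.numNodes := by omega
          have h1 := h (l.numNodes + 1)
          rw [lvec_root, lvec_right (by omega)] at h1
          rcases Nat.eq_zero_or_pos (l.numNodes + 1 - l'.numNodes - 1) with hz | hz
          · rw [hz, lvec_zero] at h1; omega
          · have := lvec_lt (t := r') hz; omega
      have hrr : r.numNodes = r'.numNodes := by
        simp only [numNodes] at hn; omega
      have hl : l = l' := by
        apply ihl hll
        intro i
        rcases Nat.eq_zero_or_pos i with hz | hz
        · rw [hz, lvec_zero, lvec_zero]
        rcases le_or_gt i l.numNodes with hle | hlt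
        · have := h i
          rwa [lvec_left hle, lvec_left (by omega)] at this
        · rw [lvec_eq_zero (by omega), lvec_eq_zero (by omega)]
      have hr : r = r' := by
        apply ihr hrr
        intro i
        rcases Nat.eq_zero_or_pos i with hz | hz
        · rw [hz, lvec_zero, lvec_zero]
        have hx := h (i + l.numNodes + 1)
        rw [lvec_right (by omega), lvec_right (by omega),
          show i + l.numNodes + 1 - l.numNodes - 1 = i from by omega,
          show i + l.numNodes + 1 - l'.numNodes - 1 = i from by omega] at hx
        exact hx
      rw [hl, hr]

/-- The key rotation step: if the nesting hypothesis holds at `i` for a target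
value `c < lvec s i`, there is a rotation lowering coordinate `i` to at least
`c` and leaving all other coordinates unchanged. -/
theorem rot_step : ∀ (s : PBT) (i c : ℕ), c < lvec s i →
    (∀ j, 1 ≤ j → j < i → i ≤ j + c → i + lvec s j ≤ j + c) →
    ∃ s', Rot s s' ∧ c ≤ lvec s' i ∧ ∀ j, j ≠ i → lvec s' j = lvec s j := by
  intro s
  induction s with
  | leaf => intro i c hc _; simp [lvec] at hc
  | node l r ihl ihr =>
    intro i c hc hnest
    rcases lt_trichotomy i (l.numNodes + 1) with h1 | h1 | h1
    · -- i in left subtree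
      have hi : i ≤ l.numNodes := by omega
      rw [lvec_left hi] at hc
      obtain ⟨l', hrot, hge, hother⟩ := ihl i c hc (by
        intro j hj1 hji hjc
        have := hnest j hj1 hji hjc
        rwa [lvec_left (by omega)] at this)
      have hnn := hrot.numNodes_eq
      refine ⟨node l' r, Rot.left r hrot, ?_, ?_⟩
      · rw [lvec_left (by omega)]
        exact hge
      · intro j hj
        have ho : j ≠ i → lvec l' j = lvec l j := hother j
        simp only [lvec]
        rw [hnn]
        split_ifs <;> first | (exact ho hj) | rfl | omega
    · -- i is the root: rotate here
      subst h1
      rw [lvec_root] at hc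
      match l, hc with
      | node l₁ l₂, hc =>
      have ha : (node l₁ l₂).numNodes = l₁.numNodes + l₂.numNodes + 1 := rfl
      have hj0 : lvec (node (node l₁ l₂) r) (l₁.numNodes + 1) = l₁.numNodes := by
        rw [lvec_left (by omega), lvec_root]
      have hkey : c ≤ l₂.numNodes := by
        by_contra hlt
        push_neg at hlt
        have := hnest (l₁.numNodes + 1) (by omega) (by omega) (by omega)
        rw [hj0] at this
        omega
      refine ⟨node l₁ (node l₂ r), Rot.here l₁ l₂ r, ?_, ?_⟩
      · rw [lvec_right (by omega),
          show (node l₁ l₂).numNodes + 1 - l₁.numNodes - 1 = l₂.numNodes + 1 from by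
            rw [ha]; omega, lvec_root]
        exact hkey
      · intro j hj
        rw [ha] at hj
        simp only [lvec, numNodes]
        rw [show j - l₁.numNodes - 1 - l₂.numNodes - 1
            = j - (l₁.numNodes + l₂.numNodes + 1) - 1 from by omega]
        split_ifs <;> (try simp only [*, ↓reduceIte]) <;> omega
    · -- i in right subtree
      rw [lvec_right h1] at hc
      obtain ⟨r', hrot, hge, hother⟩ := ihr (i - l.numNodes - 1) c hc (by
        intro j hj1 hji hjc
        have := hnest (j + l.numNodes + 1) (by omega) (by omega) (by omega)
        rw [lvec_right (by omega),
          show j + l.numNodes + 1 - l.numNodes - 1 = j from by omega] at this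
        omega)
      refine ⟨node l r', Rot.right l hrot, ?_, ?_⟩
      · rw [lvec_right h1]
        exact hge
      · intro j hj
        rcases lt_trichotomy j (l.numNodes + 1) with h2 | h2 | h2
        · rw [lvec_left (by omega), lvec_left (by omega)]
        · subst h2
          rw [lvec_root, lvec_root]
        · rw [lvec_right (by omega), lvec_right (by omega)]
          exact hother _ (by omega)
/-- Hard direction of the vector characterization of the Tamari order. -/
theorem tamari_of_lvec_le : ∀ (s t : PBT), s.numNodes = t.numNodes →
    (∀ i, lvec t i ≤ lvec s i) → tamariLE s t := by
  intro s
  induction s using (measure wt).wf.induction with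
  | _ s IH =>
  intro t hn hle
  by_cases heq : ∀ i, lvec s i = lvec t i
  · rw [lvec_inj hn heq]
    exact Relation.ReflTransGen.refl
  · push_neg at heq
    have hex : ∃ i, lvec t i < lvec s i := by
      obtain ⟨i, hi⟩ := heq
      exact ⟨i, lt_of_le_of_ne (hle i) (fun h => hi h.symm)⟩
    classical
    obtain ⟨i, hi, hmin'⟩ : ∃ i, lvec t i < lvec s i ∧ ∀ j < i, ¬ lvec t j < lvec s j :=
      ⟨Nat.find hex, Nat.find_spec hex, fun j hj => Nat.find_min hex hj⟩
    have hmin : ∀ j, j < i → lvec s j = lvec t j := by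
      intro j hj
      have := hmin' j hj
      have := hle j
      omega
    have hi1 : 1 ≤ i := Nat.pos_of_ne_zero (by
      rintro rfl; rw [lvec_zero, lvec_zero] at hi; omega)
    obtain ⟨s', hrot, hge, hother⟩ := rot_step s i (lvec t i) hi (by
      intro j hj1 hji hjc
      have hnst := lvec_nest (t := t) hj1 hji hjc
      rw [← hmin j hji] at hnst
      exact hnst)
    have hle' : ∀ k, lvec t k ≤ lvec s' k := by
      intro k
      by_cases hk : k = i
      · rw [hk]; exact hge
      · rw [hother k hk]; exact hle k
    exact Relation.ReflTransGen.head hrot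
      (IH s' hrot.wt_lt t (hrot.numNodes_eq ▸ hn) hle')

/-- Realization of the pointwise min of two tree vectors. -/
theorem exists_min_tree : ∀ (s t : PBT), s.numNodes = t.numNodes →
    ∃ u : PBT, u.numNodes = s.numNodes ∧ ∀ i, lvec u i = min (lvec s i) (lvec t i) := by
  intro s
  induction s using (measure wt).wf.induction with
  | _ s IH =>
  intro t hn
  by_cases hca : ∀ i, lvec s i ≤ lvec t i
  · exact ⟨s, rfl, fun i => (Nat.min_eq_left (hca i)).symm⟩
  · push_neg at hca
    classical
    have hex : ∃ i, lvec t i < lvec s i := hca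
    obtain ⟨i, hi, hmin'⟩ : ∃ i, lvec t i < lvec s i ∧ ∀ j < i, ¬ lvec t j < lvec s j :=
      ⟨Nat.find hex, Nat.find_spec hex, fun j hj => Nat.find_min hex hj⟩
    have hmin : ∀ j, j < i → lvec s j ≤ lvec t j := by
      intro j hj
      have := hmin' j hj
      omega
    have hi1 : 1 ≤ i := Nat.pos_of_ne_zero (by
      rintro rfl; rw [lvec_zero, lvec_zero] at hi; omega)
    obtain ⟨s', hrot, hge, hother⟩ := rot_step s i (lvec t i) hi (by
      intro j hj1 hji hjc
      have hnst := lvec_nest (t := t) hj1 hji hjc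
      have := hmin j hji
      omega)
    obtain ⟨u, hu1, hu2⟩ := IH s' hrot.wt_lt t (hrot.numNodes_eq ▸ hn)
    refine ⟨u, by rw [hu1, hrot.numNodes_eq], ?_⟩
    intro k
    rw [hu2 k]
    by_cases hk : k = i
    · rw [hk]
      have h1 := hrot.lvec_le i
      have h2 : lvec t i ≤ lvec s' i := hk ▸ hge
      omega
    · rw [hother k hk]

/-- Existence of Tamari joins. -/
theorem tamari_join (s t : PBT) (hn : s.numNodes = t.numNodes) :
    ∃ u : PBT, u.numNodes = s.numNodes ∧ tamariLE s u ∧ tamariLE t u ∧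
      ∀ v, tamariLE s v → tamariLE t v → tamariLE u v := by
  obtain ⟨u, hu1, hu2⟩ := exists_min_tree s t hn
  refine ⟨u, hu1, ?_, ?_, ?_⟩
  · exact tamari_of_lvec_le s u hu1.symm (fun i => by rw [hu2 i]; omega)
  · exact tamari_of_lvec_le t u (hn ▸ hu1.symm) (fun i => by rw [hu2 i]; omega)
  · intro v hsv htv
    refine tamari_of_lvec_le u v (hu1.trans hsv.numNodes_eq) ?_
    intro i
    have h1 := hsv.lvec_le i
    have h2 := htv.lvec_le i
    rw [hu2 i]
    omega

/-- Left comb: the minimum of the Tamari order. -/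
def lcomb : ℕ → PBT
  | 0 => leaf
  | n + 1 => node (lcomb n) leaf

theorem lcomb_numNodes (n : ℕ) : (lcomb n).numNodes = n := by
  induction n with
  | zero => rfl
  | succ n ih => simp [lcomb, numNodes, ih]

theorem lvec_lcomb {n i : ℕ} (h1 : 1 ≤ i) (h2 : i ≤ n) : lvec (lcomb n) i = i - 1 := by
  induction n with
  | zero => omega
  | succ n ih =>
    rcases le_or_gt i n with h | h
    · rw [lcomb, lvec_left (by rw [lcomb_numNodes]; omega)]
      exact ih h
    · have : i = n + 1 := by omega
      rw [this, lcomb, show n + 1 = (lcomb n).numNodes + 1 from by rw [lcomb_numNodes],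
        lvec_root, lcomb_numNodes]
      omega

theorem lcomb_le {t : PBT} {n : ℕ} (hn : t.numNodes = n) : tamariLE (lcomb n) t := by
  apply tamari_of_lvec_le _ _ (by rw [lcomb_numNodes, hn])
  intro i
  rcases Nat.eq_zero_or_pos i with h | h
  · rw [h, lvec_zero]; exact Nat.zero_le _
  rcases le_or_gt i n with h2 | h2
  · rw [lvec_lcomb h h2]
    have := lvec_lt (t := t) h
    omega
  · rw [lvec_eq_zero (by omega)]; exact Nat.zero_le _

theorem rvec_lcomb (n i : ℕ) : rvec (lcomb n) i = 0 := by
  induction n generalizing i with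
  | zero => rfl
  | succ n ih =>
    simp only [lcomb, rvec, lcomb_numNodes]
    split_ifs <;> simp [ih, numNodes]
theorem idx_bounds {t : PBT} {p : List Bool} (h : isNode t p) :
    1 ≤ idx t p ∧ idx t p ≤ t.numNodes := by
  induction t generalizing p with
  | leaf => exact absurd h (by cases p <;> simp [isNode])
  | node l r ihl ihr =>
    cases p with
    | nil => simp only [idx, numNodes]; omega
    | cons b p' =>
      cases b with
      | false =>
        have := ihl (p := p') (by simpa [isNode] using h)
        simp only [idx, numNodes]
        omega
      | true =>
        have := ihr (p := p') (by simpa [isNode] using h)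
        simp only [idx, numNodes]
        omega

theorem idx_surj {t : PBT} {i : ℕ} (h1 : 1 ≤ i) (h2 : i ≤ t.numNodes) :
    ∃ p, isNode t p ∧ idx t p = i := by
  induction t generalizing i with
  | leaf => simp [numNodes] at h2; omega
  | node l r ihl ihr =>
    rcases lt_trichotomy i (l.numNodes + 1) with h | h | h
    · obtain ⟨p, hp1, hp2⟩ := ihl h1 (by omega)
      exact ⟨false :: p, by simpa [isNode], by simpa [idx]⟩
    · refine ⟨[], by simp [isNode], ?_⟩
      show l.numNodes + 1 = i
      omega
    · have hn : i ≤ l.numNodes + r.numNodes + 1 := by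
        simpa [numNodes] using h2
      obtain ⟨p, hp1, hp2⟩ := ihr (i := i - l.numNodes - 1) (by omega) (by omega)
      refine ⟨true :: p, by simpa [isNode], ?_⟩
      simp only [idx, hp2]
      omega

theorem idx_inj {t : PBT} {p q : List Bool} (hp : isNode t p) (hq : isNode t q)
    (h : idx t p = idx t q) : p = q := by
  induction t generalizing p q with
  | leaf => exact absurd hp (by cases p <;> simp [isNode])
  | node l r ihl ihr =>
    cases p with
    | nil =>
      cases q with
      | nil => rfl
      | cons b q' =>
        cases b with
        | false =>
          have := idx_bounds (t := l) (p := q') (by simpa [isNode] using hq)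
          simp only [idx] at h
          omega
        | true =>
          have := idx_bounds (t := r) (p := q') (by simpa [isNode] using hq)
          simp only [idx] at h
          omega
    | cons b p' =>
      cases q with
      | nil =>
        cases b with
        | false =>
          have := idx_bounds (t := l) (p := p') (by simpa [isNode] using hp)
          simp only [idx] at h
          omega
        | true =>
          have := idx_bounds (t := r) (p := p') (by simpa [isNode] using hp)
          simp only [idx] at h
          omega
      | cons b' q' =>
        have hp' := hp
        have hq' := hq
        cases b <;> cases b' <;>
          simp only [isNode] at hp' hq' <;> simp only [idx] at h
        · rw [ihl hp' hq' h]
        · have h1 := idx_bounds hp'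
          have h2 := idx_bounds hq'
          omega
        · have h1 := idx_bounds hp'
          have h2 := idx_bounds hq'
          omega
        · rw [ihr hp' hq' (by omega)]

theorem idx_prefix_bounds : ∀ (t : PBT) (p q : List Bool), isNode t p → isNode t q →
    q <+: p → idx t q ≤ idx t p + lvec t (idx t q) ∧
      idx t p ≤ idx t q + rvec t (idx t q) := by
  intro t
  induction t with
  | leaf => intro p _ hp _ _; exact absurd hp (by cases p <;> simp [isNode])
  | node l r ihl ihr =>
    intro p q hp hq hpre
    cases q with
    | nil =>
      have hb := idx_bounds hp
      simp only [idx, lvec_root, rvec_root, numNodes] at *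
      omega
    | cons b q' =>
      obtain ⟨w, hw⟩ := hpre
      cases p with
      | nil => simp at hw
      | cons b2 p' =>
        obtain ⟨rfl, hpre'⟩ : b = b2 ∧ q' <+: p' := by
          injection hw with h1 h2
          exact ⟨h1, ⟨w, h2⟩⟩
        cases b with
        | false =>
          simp only [isNode] at hp hq
          have hql := idx_bounds hq
          have := ihl p' q' hp hq hpre'
          simp only [idx]
          rw [lvec_left (by omega), rvec_left (by omega)]
          exact this
        | true =>
          simp only [isNode] at hp hq
          have hql := idx_bounds hq
          have := ihr p' q' hp hq hpre'
          simp only [idx]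
          rw [lvec_right (by omega), rvec_right (by omega),
            show l.numNodes + 1 + idx r q' - l.numNodes - 1 = idx r q' from by omega]
          omega

theorem nodeLE_bounds {t : PBT} {i j : ℕ} (h : nodeLE t i j) :
    j ≤ i + lvec t j ∧ i ≤ j + rvec t j := by
  obtain ⟨p, q, hp, hq, hip, hjq, hpre⟩ := h
  subst hip; subst hjq
  exact idx_prefix_bounds t p q hp hq hpre

theorem nodeLE_idx_bounds {t : PBT} {i j : ℕ} (h : nodeLE t i j) :
    1 ≤ i ∧ i ≤ t.numNodes ∧ 1 ≤ j ∧ j ≤ t.numNodes := by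
  obtain ⟨p, q, hp, hq, hip, hjq, hpre⟩ := h
  have h1 := idx_bounds hp
  have h2 := idx_bounds hq
  omega

theorem nodeLE_of_bounds {t : PBT} {i j : ℕ} (hi1 : 1 ≤ i) (hi2 : i ≤ t.numNodes)
    (hj1 : 1 ≤ j) (hj2 : j ≤ t.numNodes)
    (hl : j ≤ i + lvec t j) (hr : i ≤ j + rvec t j) : nodeLE t i j := by
  induction t generalizing i j with
  | leaf => simp [numNodes] at hi2; omega
  | node l r ihl ihr =>
    rcases lt_trichotomy j (l.numNodes + 1) with h | h | h
    · -- j in the left subtree; then i is too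
      have hjl : j ≤ l.numNodes := by omega
      rw [lvec_left hjl] at hl
      rw [rvec_left hjl] at hr
      have hrb := rvec_bound (t := l) hj1 hjl
      have hil : i ≤ l.numNodes := by omega
      obtain ⟨p, q, hp, hq, hip, hjq, hpre⟩ := ihl hi1 hil hj1 hjl hl hr
      exact ⟨false :: p, false :: q, by simpa [isNode], by simpa [isNode],
        by simpa [idx], by simpa [idx], by obtain ⟨w, hw⟩ := hpre; exact ⟨w, by simp [hw]⟩⟩
    · -- j is the root
      subst h
      obtain ⟨p, hp, hip⟩ := idx_surj hi1 hi2
      exact ⟨p, [], hp, by simp [isNode], hip, by simp [idx], List.nil_prefix⟩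
    · -- j in the right subtree; then i is too
      rw [lvec_right h] at hl
      rw [rvec_right h] at hr
      have hlt := lvec_lt (t := r) (i := j - l.numNodes - 1) (by omega)
      have hjr : j - l.numNodes - 1 ≤ r.numNodes := by
        simp only [numNodes] at hj2; omega
      have hir : l.numNodes + 1 < i := by omega
      obtain ⟨p, q, hp, hq, hip, hjq, hpre⟩ := ihr (i := i - l.numNodes - 1)
        (j := j - l.numNodes - 1) (by omega) (by simp only [numNodes] at hi2; omega)
        (by omega) hjr (by omega) (by omega)
      refine ⟨true :: p, true :: q, by simpa [isNode], by simpa [isNode],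
        ?_, ?_, by obtain ⟨w, hw⟩ := hpre; exact ⟨w, by simp [hw]⟩⟩
      · simp only [idx, hip]; omega
      · simp only [idx, hjq]; omega

theorem nodeLE_refl {t : PBT} {i : ℕ} (h1 : 1 ≤ i) (h2 : i ≤ t.numNodes) :
    nodeLE t i i := by
  obtain ⟨p, hp, hip⟩ := idx_surj h1 h2
  exact ⟨p, p, hp, hp, hip, hip, List.prefix_refl p⟩

theorem nodeLE_trans {t : PBT} {i j k : ℕ} (h1 : nodeLE t i j) (h2 : nodeLE t j k) :
    nodeLE t i k := by
  obtain ⟨p, q, hp, hq, hip, hjq, hpre⟩ := h1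
  obtain ⟨p', q', hp', hq', hjp', hkq', hpre'⟩ := h2
  have : p' = q := idx_inj hp' hq (by rw [hjp', hjq])
  subst this
  exact ⟨p, q', hp, hq', hip, hkq', hpre'.trans hpre⟩

theorem nodeLE_antisymm {t : PBT} {i j : ℕ} (h1 : nodeLE t i j) (h2 : nodeLE t j i) :
    i = j := by
  obtain ⟨p, q, hp, hq, hip, hjq, hpre⟩ := h1
  obtain ⟨p', q', hp', hq', hjp', hkq', hpre'⟩ := h2
  have e1 : p' = q := idx_inj hp' hq (by rw [hjp', hjq])
  have e2 : q' = p := idx_inj hq' hp (by rw [hkq', hip])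
  have hp2 : p <+: q := e1 ▸ e2 ▸ hpre'
  have hq_eq : q = p := hpre.eq_of_length (le_antisymm hpre.length_le hp2.length_le)
  rw [← hip, ← hjq, hq_eq]

/-- Left-descendancy transfers down the Tamari order. -/
theorem nodeLE_left_down {s u : PBT} {i j : ℕ} (hsu : tamariLE s u)
    (h : nodeLE u i j) (hij : i ≤ j) : nodeLE s i j := by
  have hb := nodeLE_bounds h
  have hbi := nodeLE_idx_bounds h
  have hnn := hsu.numNodes_eq
  have hlv := hsu.lvec_le j
  exact nodeLE_of_bounds (by omega) (by omega) (by omega) (by omega)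
    (by omega) (by omega)

/-- Right-descendancy transfers up the Tamari order. -/
theorem nodeLE_right_up {u v : PBT} {i j : ℕ} (huv : tamariLE u v)
    (h : nodeLE u i j) (hij : j ≤ i) : nodeLE v i j := by
  have hb := nodeLE_bounds h
  have hbi := nodeLE_idx_bounds h
  have hnn := huv.numNodes_eq
  have hrv := huv.rvec_le j
  exact nodeLE_of_bounds (by omega) (by omega) (by omega) (by omega)
    (by omega) (by omega)
/-- All trees with `n` internal nodes. -/
def treeList : ℕ → List PBT
  | 0 => [leaf]
  | n + 1 =>
    (List.range (n + 1)).attach.flatMap fun k =>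
      (treeList k.1).flatMap fun l => (treeList (n - k.1)).map (node l)
decreasing_by
  · have := List.mem_range.mp k.2; omega
  · have := List.mem_range.mp k.2; omega

theorem mem_treeList : ∀ t : PBT, t ∈ treeList t.numNodes := by
  intro t
  induction t with
  | leaf => simp [treeList, numNodes]
  | node l r ihl ihr =>
    have hn : numNodes (node l r) = (l.numNodes + r.numNodes) + 1 := by
      simp [numNodes]
    rw [hn, treeList]
    simp only [List.mem_flatMap, List.mem_map]
    refine ⟨⟨l.numNodes, List.mem_range.mpr (by omega)⟩, List.mem_attach _ _,
      l, ihl, r, ?_, rfl⟩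
    rw [show l.numNodes + r.numNodes - l.numNodes = r.numNodes from by omega]
    exact ihr

theorem finite_trees (n : ℕ) : Finite {t : PBT // t.numNodes = n} := by
  have h : {t : PBT | t.numNodes = n}.Finite := by
    apply Set.Finite.subset (treeList n).finite_toSet
    intro t ht
    have := mem_treeList t
    rw [ht] at this
    exact this
  exact h.to_subtype

end PBT

/-- Bi-leveled trees with `n` internal nodes: a planar binary tree together with
an upper order ideal `T` of its node poset (nodes indexed `1,…,n` left to right)
containing the leftmost node (index 1) as a minimal element. -/
structure BLT (n : ℕ) where
  t : PBT
  hn : t.numNodes = n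
  T : Set ℕ
  hsub : T ⊆ Set.Icc 1 n
  hideal : ∀ i j, PBT.nodeLE t i j → i ∈ T → j ∈ T
  hone : (1 : ℕ) ∈ T
  hmin : ∀ i ∈ T, PBT.nodeLE t i 1 → i = 1

/-- The partial order on bi-leveled trees: `(s;S) ≤ (t;T)` iff `s ≤ t` in the
Tamari order and `T ⊆ S`. -/
instance BLT.instPreorder (n : ℕ) : Preorder (BLT n) where
  le x y := PBT.tamariLE x.t y.t ∧ y.T ⊆ x.T
  le_refl x := ⟨Relation.ReflTransGen.refl, le_refl _⟩
  le_trans x y z h h' := ⟨h.1.trans h'.1, h'.2.trans h.2⟩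

/-- Trees with `n` internal nodes, as a preorder under the Tamari order. -/
instance Yn.instPreorder (n : ℕ) : Preorder {t : PBT // t.numNodes = n} where
  le x y := PBT.tamariLE x.1 y.1
  le_refl x := Relation.ReflTransGen.refl
  le_trans x y z h h' := Relation.ReflTransGen.trans h h'


theorem BLT.ext' {n : ℕ} {z w : BLT n} (h1 : z.t = w.t) (h2 : z.T = w.T) : z = w := by
  cases z; cases w; simp_all

theorem BLT.finite (n : ℕ) : Finite (BLT n) := by
  haveI := PBT.finite_trees n
  haveI : Finite ({t : PBT // t.numNodes = n} × (Fin (n + 1) → Prop)) := by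
    infer_instance
  apply Finite.of_injective
    (fun z : BLT n => ((⟨z.t, z.hn⟩ : {t : PBT // t.numNodes = n}),
      fun i : Fin (n + 1) => (i : ℕ) ∈ z.T))
  intro z w h
  simp only [Prod.mk.injEq, Subtype.mk.injEq] at h
  apply BLT.ext' h.1
  ext i
  by_cases hi : i ≤ n
  · exact iff_of_eq (congrFun h.2 ⟨i, by omega⟩)
  · constructor
    · intro hmem; exact absurd (z.hsub hmem).2 hi
    · intro hmem; exact absurd (w.hsub hmem).2 hi

theorem exists_top_of_directed {α : Type*} [Preorder α] (D : Finset α)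
    (hdir : ∀ a ∈ D, ∀ b ∈ D, ∃ c ∈ D, a ≤ c ∧ b ≤ c) :
    ∀ s : Finset α, s ⊆ D → s.Nonempty → ∃ m ∈ D, ∀ a ∈ s, a ≤ m := by
  intro s
  classical
  induction s using Finset.induction_on with
  | empty => intro _ h; exact absurd h (by simp)
  | insert _ _ ha ih =>
    rename_i a s'
    intro hsub hne
    have haD : a ∈ D := hsub (Finset.mem_insert_self a s')
    rcases s'.eq_empty_or_nonempty with rfl | hne'
    · exact ⟨a, haD, by simp⟩
    · obtain ⟨m', hm'D, hm'⟩ := ih (fun b hb => hsub (Finset.mem_insert_of_mem hb)) hne'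
      obtain ⟨c, hcD, hac, hm'c⟩ := hdir a haD m' hm'D
      refine ⟨c, hcD, ?_⟩
      intro b hb
      rcases Finset.mem_insert.mp hb with rfl | hb'
      · exact hac
      · exact (hm' b hb').trans hm'c
open PBT in
theorem BLT.exists_lub (n : ℕ) (x y : BLT n) : ∃ z : BLT n, IsLUB {x, y} z := by
  obtain ⟨u, hun', hxu, hyu, hleast⟩ := tamari_join x.t y.t (x.hn.trans y.hn.symm)
  have hun : u.numNodes = n := hun'.trans x.hn
  have hn1 : 1 ≤ n := (x.hsub x.hone).2
  -- "good" marking sets of `u` inside `x.T ∩ y.T`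
  let good : Set ℕ → Prop := fun W => W ⊆ x.T ∧ W ⊆ y.T ∧
    (∀ i j, nodeLE u i j → i ∈ W → j ∈ W) ∧ (1 : ℕ) ∈ W ∧
    (∀ i ∈ W, nodeLE u i 1 → i = 1)
  have hrefl1 : nodeLE u 1 1 := nodeLE_refl le_rfl (by omega)
  have hanc : good {j | nodeLE u 1 j} := by
    refine ⟨?_, ?_, ?_, hrefl1, ?_⟩
    · intro j hj
      have hb := nodeLE_idx_bounds hj
      exact x.hideal 1 j (nodeLE_left_down hxu hj hb.2.2.1) x.hone
    · intro j hj
      have hb := nodeLE_idx_bounds hj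
      exact y.hideal 1 j (nodeLE_left_down hyu hj hb.2.2.1) y.hone
    · intro i j hij hi
      exact nodeLE_trans hi hij
    · intro i hi h1
      exact nodeLE_antisymm h1 hi
  let U : Set ℕ := {i | ∃ W, good W ∧ i ∈ W}
  have hUx : U ⊆ x.T := fun i ⟨W, hW, hi⟩ => hW.1 hi
  have hUy : U ⊆ y.T := fun i ⟨W, hW, hi⟩ => hW.2.1 hi
  refine ⟨⟨u, hun, U, ?_, ?_, ?_, ?_⟩, ?_, ?_⟩
  · exact fun i hi => x.hsub (hUx hi)
  · rintro i j hij ⟨W, hW, hi⟩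
    exact ⟨W, hW, hW.2.2.1 i j hij hi⟩
  · exact ⟨_, hanc, hrefl1⟩
  · rintro i ⟨W, hW, hi⟩ h1
    exact hW.2.2.2.2 i hi h1
  · -- upper bound
    rintro w (rfl | rfl)
    · exact ⟨hxu, hUx⟩
    · exact ⟨hyu, hUy⟩
  · -- least among upper bounds
    rintro w hw
    have hxw : x ≤ w := hw (Set.mem_insert x {y})
    have hyw : y ≤ w := hw (Set.mem_insert_of_mem x rfl)
    have huw : tamariLE u w.t := hleast w.t hxw.1 hyw.1
    refine ⟨huw, ?_⟩
    -- the upward closure of w.T in u is good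
    have hgood : good {j | ∃ i ∈ w.T, nodeLE u i j} := by
      refine ⟨?_, ?_, ?_, ⟨1, w.hone, hrefl1⟩, ?_⟩
      · rintro j ⟨i, hi, hij⟩
        rcases le_total i j with hle | hle
        · exact x.hideal i j (nodeLE_left_down hxu hij hle) (hxw.2 hi)
        · exact hxw.2 (w.hideal i j (nodeLE_right_up huw hij hle) hi)
      · rintro j ⟨i, hi, hij⟩
        rcases le_total i j with hle | hle
        · exact y.hideal i j (nodeLE_left_down hyu hij hle) (hyw.2 hi)
        · exact hyw.2 (w.hideal i j (nodeLE_right_up huw hij hle) hi)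
      · rintro i j hij ⟨i', hi', hii⟩
        exact ⟨i', hi', nodeLE_trans hii hij⟩
      · rintro j ⟨i, hi, hij⟩ h1
        have hi1 : nodeLE u i 1 := nodeLE_trans hij h1
        have hb := nodeLE_idx_bounds hi1
        have : i = 1 := w.hmin i hi (nodeLE_right_up huw hi1 hb.1)
        subst this
        exact nodeLE_antisymm h1 hij
    intro i hi
    have hb := x.hsub (hxw.2 hi)
    exact ⟨_, hgood, ⟨i, hi, nodeLE_refl hb.1 (by rw [hun]; exact hb.2)⟩⟩
open PBT
/-- The set of bi-leveled trees on `n` internal nodes, ordered by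
`(s;S) ≤ (t;T)` iff `s ≤ t` in the Tamari order and `T ⊆ S`, is a lattice:
every pair has a least upper bound and a greatest lower bound. -/
theorem BLT_lattice (n : ℕ) (x y : BLT n) :
    (∃ z : BLT n, IsLUB {x, y} z) ∧ (∃ z : BLT n, IsGLB {x, y} z) := by
  refine ⟨BLT.exists_lub n x y, ?_⟩
  -- the bottom element
  have hn1 : 1 ≤ n := (x.hsub x.hone).2
  have hb_min : ∀ i : ℕ, nodeLE (lcomb n) i 1 → i = 1 := by
    intro i h
    have hb := nodeLE_bounds h
    have hbi := nodeLE_idx_bounds h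
    rw [rvec_lcomb] at hb
    omega
  let bot : BLT n :=
    ⟨lcomb n, lcomb_numNodes n, Set.Icc 1 n, subset_rfl,
      fun i j hij _ => by
        have hbi := nodeLE_idx_bounds hij
        rw [lcomb_numNodes] at hbi
        exact ⟨hbi.2.2.1, hbi.2.2.2⟩,
      by simp [hn1],
      fun i _ h => hb_min i h⟩
  have hbot : ∀ z : BLT n, bot ≤ z := by
    intro z
    exact ⟨lcomb_le z.hn, z.hsub⟩
  -- lower bounds of {x, y}
  let L : Set (BLT n) := {z | z ≤ x ∧ z ≤ y}
  haveI := BLT.finite n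
  have hLfin : L.Finite := Set.toFinite L
  have hLne : (hLfin.toFinset).Nonempty :=
    ⟨bot, hLfin.mem_toFinset.mpr ⟨hbot x, hbot y⟩⟩
  have hdir : ∀ a ∈ hLfin.toFinset, ∀ b ∈ hLfin.toFinset,
      ∃ c ∈ hLfin.toFinset, a ≤ c ∧ b ≤ c := by
    intro a ha b hb
    rw [hLfin.mem_toFinset] at ha hb
    obtain ⟨c, hc⟩ := BLT.exists_lub n a b
    have hca : c ≤ x := hc.2 (by rintro w (rfl | rfl); exacts [ha.1, hb.1])
    have hcb : c ≤ y := hc.2 (by rintro w (rfl | rfl); exacts [ha.2, hb.2])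
    refine ⟨c, hLfin.mem_toFinset.mpr ⟨hca, hcb⟩, ?_, ?_⟩
    · exact hc.1 (Set.mem_insert a {b})
    · exact hc.1 (Set.mem_insert_of_mem a rfl)
  obtain ⟨m, hmD, hm⟩ := exists_top_of_directed hLfin.toFinset hdir
    hLfin.toFinset subset_rfl hLne
  rw [hLfin.mem_toFinset] at hmD
  refine ⟨m, ?_, ?_⟩
  · rintro w (rfl | rfl)
    · exact hmD.1
    · exact hmD.2
  · intro w hw
    have hwx : w ≤ x := hw (Set.mem_insert x {y})
    have hwy : w ≤ y := hw (Set.mem_insert_of_mem x rfl)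
    exact hm w (hLfin.mem_toFinset.mpr ⟨hwx, hwy⟩)
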